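/- arXiv:1507.03275 — 7 statements merged into one kernel-verified Lean document; each statement's English description precedes it below -/
import Mathlib

section
/- Let f(x) be a monic polynomial with integer coefficients and let m ≥ 2 be an integer. Then there exist polynomials g(x), r(x) with integer coefficients and integers k > l ≥ 0 such that f(x)·g(x) + m·r(x) = x^k − x^l. -/
open Polynomial

theorem stmt_0 (f : Polynomial ℤ) (hf : f.Monic) (m : ℤ) (hm : 2 ≤ m) :
    ∃ (g r : Polynomial ℤ) (k l : ℕ), l < k ∧
      f * g + C m * r = X ^ k - X ^ l := by
  set t : ℕ := m.toNat with ht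
  have htm : (t : ℤ) = m := Int.toNat_of_nonneg (by omega)
  haveI : NeZero t := ⟨by omega⟩
  set d := f.natDegree with hd
  -- pigeonhole on coefficients of X^n %ₘ f mod m
  let G : ℕ → (Fin d → ZMod t) := fun n i => ((X ^ n %ₘ f).coeff i : ZMod t)
  obtain ⟨a, b, hab, hGab⟩ := Finite.exists_ne_map_eq_of_infinite G
  wlog hlt : b < a generalizing a b
  · exact this b a hab.symm hGab.symm (by omega)
  refine ⟨X ^ a /ₘ f - X ^ b /ₘ f, ?_, a, b, hlt, ?_⟩
  case _ =>
    -- divide the remainder difference by m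
    have hdvd : C m ∣ (X ^ a %ₘ f - X ^ b %ₘ f) := by
      rw [Polynomial.C_dvd_iff_dvd_coeff]
      intro i
      rw [coeff_sub]
      by_cases hi : i < d
      · have := congrFun hGab ⟨i, hi⟩
        simp only [G] at this
        rw [ZMod.intCast_eq_intCast_iff, Int.ModEq] at this
        rw [← htm]
        exact Int.ModEq.dvd (Int.ModEq.symm this)
      · have h1 : (X ^ a %ₘ f).coeff i = 0 := by
          apply coeff_eq_zero_of_degree_lt
          calc (X ^ a %ₘ f).degree < f.degree := degree_modByMonic_lt _ hf
            _ ≤ (i : WithBot ℕ) := by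
                rw [degree_eq_natDegree hf.ne_zero]
                exact_mod_cast (by omega : d ≤ i)
        have h2 : (X ^ b %ₘ f).coeff i = 0 := by
          apply coeff_eq_zero_of_degree_lt
          calc (X ^ b %ₘ f).degree < f.degree := degree_modByMonic_lt _ hf
            _ ≤ (i : WithBot ℕ) := by
                rw [degree_eq_natDegree hf.ne_zero]
                exact_mod_cast (by omega : d ≤ i)
        simp [h1, h2]
    exact hdvd.choose
  case _ =>
    have hdvd : C m ∣ (X ^ a %ₘ f - X ^ b %ₘ f) := by
      rw [Polynomial.C_dvd_iff_dvd_coeff]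
      intro i
      rw [coeff_sub]
      by_cases hi : i < d
      · have := congrFun hGab ⟨i, hi⟩
        simp only [G] at this
        rw [ZMod.intCast_eq_intCast_iff, Int.ModEq] at this
        rw [← htm]
        exact Int.ModEq.dvd (Int.ModEq.symm this)
      · have h1 : (X ^ a %ₘ f).coeff i = 0 := by
          apply coeff_eq_zero_of_degree_lt
          calc (X ^ a %ₘ f).degree < f.degree := degree_modByMonic_lt _ hf
            _ ≤ (i : WithBot ℕ) := by
                rw [degree_eq_natDegree hf.ne_zero]
                exact_mod_cast (by omega : d ≤ i)
        have h2 : (X ^ b %ₘ f).coeff i = 0 := by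
          apply coeff_eq_zero_of_degree_lt
          calc (X ^ b %ₘ f).degree < f.degree := degree_modByMonic_lt _ hf
            _ ≤ (i : WithBot ℕ) := by
                rw [degree_eq_natDegree hf.ne_zero]
                exact_mod_cast (by omega : d ≤ i)
        simp [h1, h2]
    have ha := modByMonic_add_div (X ^ a : Polynomial ℤ) f
    have hb := modByMonic_add_div (X ^ b : Polynomial ℤ) f
    have := hdvd.choose_spec
    rw [mul_sub, ← this]
    ring_nf
    linear_combination ha - hb
end

section
/- Let n ≥ 1 and let z₁, …, zₙ be complex numbers, not necessarily distinct. For each positive integer l let f^l(x) = (x − z₁^l)⋯(x − zₙ^l), and suppose that for each l ≥ 1 and each 0 ≤ j ≤ n there is an integer e_{j,l} whose image in ℂ equals the coefficient of x^{n−j} in f^l(x). Let p be a prime and let 0 ≤ j₀ ≤ n be such that p divides e_{j,1} for every j with j₀ < j ≤ n. Then for every l ≥ 1, p divides e_{j₀,l} if and only if p divides e_{j₀,1}. -/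
open Polynomial Finset
open scoped Classical

variable {A : Type*} [CommRing A]

/-- Elementary symmetric value of a tuple. -/
noncomputable def Es {n : ℕ} (v : Fin n → A) (j : ℕ) : A :=
  ∑ t ∈ (Finset.univ : Finset (Fin n)).powersetCard j, ∏ i ∈ t, v i

lemma coeff_prod_X_sub_C {n : ℕ} (v : Fin n → A) {j : ℕ} (hj : j ≤ n) :
    (∏ i, (X - C (v i))).coeff (n - j) = (-1) ^ j * Es v j := by
  have h1 : (∏ i, (X - C (v i))) =
      ((Finset.univ.val.map v).map (fun r => X - C r)).prod := by
    rw [Finset.prod_eq_multiset_prod, Multiset.map_map]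
    rfl
  have hcard : Multiset.card (Finset.univ.val.map v) = n := by simp
  rw [h1, Multiset.prod_X_sub_C_coeff _ (by rw [hcard]; omega), hcard]
  have h2 : n - (n - j) = j := by omega
  rw [h2, Finset.esymm_map_val]
  rfl

lemma Es_eq_zero_of_card_lt {n : ℕ} {v : Fin n → A} {j : ℕ}
    (h : (Finset.univ.filter (fun i => v i ≠ 0)).card < j) : Es v j = 0 := by
  apply Finset.sum_eq_zero
  intro t ht
  rw [Finset.mem_powersetCard] at ht
  have hns : ¬ t ⊆ Finset.univ.filter (fun i => v i ≠ 0) := by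
    intro hsub
    have := Finset.card_le_card hsub
    omega
  obtain ⟨i, hit, hiS⟩ := Finset.not_subset.mp hns
  exact Finset.prod_eq_zero hit (by simpa using hiS)

lemma Es_eq_prod_of_card_eq {n : ℕ} {v : Fin n → A} {j : ℕ}
    (h : (Finset.univ.filter (fun i => v i ≠ 0)).card = j) :
    Es v j = ∏ i ∈ Finset.univ.filter (fun i => v i ≠ 0), v i := by
  apply Finset.sum_eq_single_of_mem
  · rw [Finset.mem_powersetCard]; exact ⟨Finset.subset_univ _, h⟩
  · intro t ht hne
    rw [Finset.mem_powersetCard] at ht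
    have hns : ¬ t ⊆ Finset.univ.filter (fun i => v i ≠ 0) := by
      intro hsub
      exact hne (Finset.eq_of_subset_of_card_le hsub (by omega))
    obtain ⟨i, hit, hiS⟩ := Finset.not_subset.mp hns
    exact Finset.prod_eq_zero hit (by simpa using hiS)
lemma aeval_esymm_Es {n : ℕ} (v : Fin n → A) (k : ℕ) :
    MvPolynomial.aeval v (MvPolynomial.esymm (Fin n) ℤ k) = Es v k := by
  rw [MvPolynomial.aeval_esymm_eq_multiset_esymm, Finset.esymm_map_val]
  rfl

lemma aeval_int_cast {n : ℕ} (P : MvPolynomial (Fin n) ℤ) (b : Fin n → ℤ) :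
    MvPolynomial.aeval (fun i => ((b i : ℤ) : A)) P = ((MvPolynomial.eval b P : ℤ) : A) := by
  have h : ((MvPolynomial.eval b P : ℤ) : A)
      = (Int.castRingHom A) (MvPolynomial.eval₂ (RingHom.id ℤ) b P) := rfl
  rw [MvPolynomial.aeval_def, algebraMap_int_eq, h,
    MvPolynomial.eval₂_comp_left (Int.castRingHom A) (RingHom.id ℤ) b P, RingHom.comp_id]
  rfl

lemma key_poly (n l j₀ : ℕ) :
    ∃ P : MvPolynomial (Fin n) ℤ, ∀ (A : Type) (_ : CommRing A) (v : Fin n → A),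
      Es (fun i => v i ^ l) j₀
        = MvPolynomial.aeval (fun i : Fin n => Es v ((i : ℕ) + 1)) P := by
  set q : MvPolynomial (Fin n) ℤ :=
    MvPolynomial.aeval (fun i : Fin n => (MvPolynomial.X i) ^ l)
      (MvPolynomial.esymm (Fin n) ℤ j₀) with hq_def
  have hq : q.IsSymmetric := by
    intro τ
    have h1 : (MvPolynomial.rename τ) q
        = MvPolynomial.aeval (fun i : Fin n => (MvPolynomial.X (τ i) : MvPolynomial (Fin n) ℤ) ^ l)
            (MvPolynomial.esymm (Fin n) ℤ j₀) := by
      rw [hq_def, MvPolynomial.comp_aeval_apply]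
      simp [MvPolynomial.rename_X]
    rw [h1, show (fun i : Fin n => (MvPolynomial.X (τ i) : MvPolynomial (Fin n) ℤ) ^ l)
        = (fun i : Fin n => (MvPolynomial.X i : MvPolynomial (Fin n) ℤ) ^ l) ∘ τ from rfl,
      ← MvPolynomial.aeval_rename, (MvPolynomial.esymm_isSymmetric (Fin n) ℤ j₀) τ, hq_def]
  obtain ⟨P, hP⟩ := MvPolynomial.esymmAlgHom_fin_surjective (R := ℤ) (le_refl n) ⟨q, hq⟩
  have hP' : MvPolynomial.aeval
      (fun i : Fin n => MvPolynomial.esymm (Fin n) ℤ ((i : ℕ) + 1)) P = q := by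
    have h2 := congrArg Subtype.val hP
    rwa [MvPolynomial.esymmAlgHom_apply] at h2
  refine ⟨P, fun A instA v => ?_⟩
  have h3 := congrArg (MvPolynomial.aeval v) hP'
  rw [MvPolynomial.comp_aeval_apply] at h3
  rw [hq_def, MvPolynomial.comp_aeval_apply] at h3
  simp only [map_pow, MvPolynomial.aeval_X, aeval_esymm_Es] at h3
  rw [← h3]

lemma coeff_my (c : ℕ → A) {n j : ℕ} (h1 : 1 ≤ j) (hj : j ≤ n) :
    (X ^ n + ∑ j' ∈ Finset.range n, Polynomial.C (c (j' + 1)) * X ^ (n - (j' + 1))).coeff (n - j)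
      = c j := by
  rw [Polynomial.coeff_add, Polynomial.coeff_X_pow, Polynomial.finset_sum_coeff]
  rw [if_neg (by omega : ¬ (n - j = n)), zero_add]
  rw [Finset.sum_eq_single_of_mem (j - 1) (Finset.mem_range.mpr (by omega))]
  · rw [Polynomial.coeff_C_mul, Polynomial.coeff_X_pow, if_pos (by omega), mul_one]
    congr 1
    omega
  · intro b hb hbne
    rw [Finset.mem_range] at hb
    rw [Polynomial.coeff_C_mul, Polynomial.coeff_X_pow, if_neg (by omega), mul_zero]

theorem stmt_4 {n : ℕ} (hn : 1 ≤ n) (z : Fin n → ℂ) (e : ℕ → ℕ → ℤ)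
    (he : ∀ l : ℕ, 1 ≤ l → ∀ j : ℕ, j ≤ n →
      ((e j l : ℂ)) = (∏ i, (X - C (z i ^ l))).coeff (n - j))
    (p : ℕ) (hp : p.Prime) (j₀ : ℕ) (hj₀ : j₀ ≤ n)
    (hdiv : ∀ j : ℕ, j₀ < j → j ≤ n → (p : ℤ) ∣ e j 1) :
    ∀ l : ℕ, 1 ≤ l → ((p : ℤ) ∣ e j₀ l ↔ (p : ℤ) ∣ e j₀ 1) := by
  intro l hl
  haveI : Fact p.Prime := ⟨hp⟩
  set K := AlgebraicClosure (ZMod p) with hK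
  haveI : CharP K p := charP_of_injective_algebraMap (algebraMap (ZMod p) K).injective p
  set m : ℕ → ℤ := fun j => (-1) ^ j * e j 1 with hm
  -- elementary symmetric functions of the z's are the integers m j
  have hz : ∀ j, j ≤ n → Es z j = ((m j : ℤ) : ℂ) := by
    intro j hj
    have h := he 1 le_rfl j hj
    simp only [pow_one] at h
    rw [coeff_prod_X_sub_C z hj] at h
    have h2 : ((m j : ℤ) : ℂ) = (-1) ^ j * ((e j 1 : ℤ) : ℂ) := by push_cast [hm]; ring
    rw [h2, h, ← mul_assoc, ← mul_pow]
    norm_num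
  have hzl : ((e j₀ l : ℤ) : ℂ) = (-1) ^ j₀ * Es (fun i => z i ^ l) j₀ := by
    have h := he l hl j₀ hj₀
    rwa [coeff_prod_X_sub_C _ hj₀] at h
  obtain ⟨P, hP⟩ := key_poly n l j₀
  set N : ℤ := MvPolynomial.eval (fun i : Fin n => m ((i : ℕ) + 1)) P with hN
  -- e j₀ l = (-1)^j₀ * N
  have hNC : Es (fun i => z i ^ l) j₀ = ((N : ℤ) : ℂ) := by
    rw [hP ℂ inferInstance z]
    have h4 : (fun i : Fin n => Es z ((i : ℕ) + 1))
        = fun i : Fin n => ((m ((i : ℕ) + 1) : ℤ) : ℂ) :=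
      funext fun i => hz _ (by omega)
    rw [h4, aeval_int_cast, hN]
  have heN : e j₀ l = (-1) ^ j₀ * N := by
    have h5 : ((e j₀ l : ℤ) : ℂ) = (((-1) ^ j₀ * N : ℤ) : ℂ) := by
      rw [hzl, hNC]; push_cast; ring
    exact_mod_cast h5
  -- e 0 1 = 1
  have he0 : e 0 1 = 1 := by
    have h := hz 0 (by omega)
    have h6 : Es z 0 = 1 := by
      simp [Es, Finset.powersetCard_zero]
    rw [h6, hm] at h
    have : ((1 : ℤ) : ℂ) = ((((-1:ℤ)) ^ 0 * e 0 1 : ℤ) : ℂ) := by exact_mod_cast h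
    have := Int.cast_injective (α := ℂ) this
    omega
  -- the polynomial g over K
  set c : ℕ → K := fun j => ((e j 1 : ℤ) : K) with hc
  set g : K[X] := X ^ n + ∑ j' ∈ Finset.range n, Polynomial.C (c (j' + 1)) * X ^ (n - (j' + 1))
    with hg
  have hdeg_sum : (∑ j' ∈ Finset.range n,
      Polynomial.C (c (j' + 1)) * X ^ (n - (j' + 1))).degree < (n : WithBot ℕ) := by
    apply lt_of_le_of_lt (Polynomial.degree_sum_le _ _)
    rw [Finset.sup_lt_iff (by exact_mod_cast WithBot.bot_lt_coe n)]
    intro j hj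
    rw [Finset.mem_range] at hj
    apply lt_of_le_of_lt (Polynomial.degree_C_mul_X_pow_le _ _)
    exact_mod_cast Nat.cast_lt.mpr (by omega : n - (j + 1) < n)
  have hmonic : g.Monic := Polynomial.monic_X_pow_add hdeg_sum
  have hdeg : g.natDegree = n := by
    have : g.degree = n := by
      rw [hg, Polynomial.degree_add_eq_left_of_degree_lt (by rwa [Polynomial.degree_X_pow]),
        Polynomial.degree_X_pow]
    exact Polynomial.natDegree_eq_of_degree_eq_some this
  have hsplits : Polynomial.Splits g := IsAlgClosed.splits g
  have hcard : Multiset.card g.roots = n := by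
    rw [Polynomial.splits_iff_card_roots.mp hsplits, hdeg]
  have hfact : g = (g.roots.map fun a => X - Polynomial.C a).prod :=
    hsplits.eq_prod_roots_of_monic hmonic
  -- enumerate the roots
  set L : List K := g.roots.toList with hLdef
  have hL : L.length = n := by rw [hLdef, Multiset.length_toList, hcard]
  set w : Fin n → K := fun i => L.get (Fin.cast hL.symm i) with hw
  have hwm : Multiset.map w Finset.univ.val = g.roots := by
    have h7 : (Finset.univ.val : Multiset (Fin n)).map w = ((List.ofFn w : List K) : Multiset K) := by
      rw [Fin.univ_val_map]
    rw [h7, ← Multiset.coe_toList g.roots, ← hLdef]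
    congr 1
    apply List.ext_getElem (by simp [hL])
    intro k h1 h2
    simp [hw, List.getElem_ofFn]
  have hprod_w : (∏ i, (X - Polynomial.C (w i))) = g := by
    conv_rhs => rw [hfact]
    rw [← hwm, Multiset.map_map, Finset.prod_eq_multiset_prod]
    rfl
  -- elementary symmetric functions of the w's
  have hEsw : ∀ j, j ≤ n → Es w j = ((m j : ℤ) : K) := by
    intro j hj
    have h2 := coeff_prod_X_sub_C w hj
    rw [hprod_w] at h2
    rcases Nat.eq_zero_or_pos j with hj0 | hj1
    · subst hj0
      simp only [Es, Finset.powersetCard_zero, hm, pow_zero, one_mul, he0]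
      simp
    · rw [coeff_my c hj1 hj] at h2
      have h8 : ((m j : ℤ) : K) = (-1) ^ j * c j := by
        show (Int.castRingHom K) ((-1) ^ j * e j 1) = (-1) ^ j * (Int.castRingHom K) (e j 1)
        rw [map_mul, map_pow, map_neg, map_one]
      rw [h8, h2, ← mul_assoc, ← mul_pow]
      norm_num
  -- Es (w^l) j₀ = N in K
  have hNK : Es (fun i => w i ^ l) j₀ = ((N : ℤ) : K) := by
    rw [hP K inferInstance w]
    have h4 : (fun i : Fin n => Es w ((i : ℕ) + 1))
        = fun i : Fin n => ((m ((i : ℕ) + 1) : ℤ) : K) :=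
      funext fun i => hEsw _ (by omega)
    rw [h4, aeval_int_cast, hN]
  -- vanishing of high esymms of w
  have hvan : ∀ j, j₀ < j → j ≤ n → Es w j = 0 := by
    intro j h1 h2
    rw [hEsw j h2, CharP.intCast_eq_zero_iff K p, hm]
    exact Dvd.dvd.mul_left (hdiv j h1 h2) _
  set S := Finset.univ.filter (fun i => w i ≠ 0) with hS
  have hScard : S.card ≤ j₀ := by
    by_contra hgt
    push_neg at hgt
    have hle : S.card ≤ n := le_trans (Finset.card_filter_le _ _) (by simp)
    have h0 : Es w S.card = 0 := hvan _ hgt hle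
    rw [Es_eq_prod_of_card_eq rfl] at h0
    exact (Finset.prod_ne_zero_iff.mpr (fun i hi => (Finset.mem_filter.mp hi).2)) h0
  -- the key iff over K
  have hmain : (Es (fun i => w i ^ l) j₀ = 0) ↔ (Es w j₀ = 0) := by
    have hSl : Finset.univ.filter (fun i => w i ^ l ≠ 0) = S := by
      ext i
      simp only [Finset.mem_filter, Finset.mem_univ, true_and, hS]
      rw [pow_ne_zero_iff (by omega : l ≠ 0)]
    rcases lt_or_eq_of_le hScard with hlt | heq
    · constructor <;> intro _
      · exact Es_eq_zero_of_card_lt hlt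
      · exact Es_eq_zero_of_card_lt (by rw [hSl]; exact hlt)
    · have h1 : Es w j₀ = ∏ i ∈ S, w i := by
        rw [← heq]; exact Es_eq_prod_of_card_eq rfl
      have h2 : Es (fun i => w i ^ l) j₀ = ∏ i ∈ S, w i ^ l := by
        have := Es_eq_prod_of_card_eq (v := fun i => w i ^ l) (j := j₀)
          (by rw [hSl, ← heq])
        rwa [hSl] at this
      have hne1 : Es w j₀ ≠ 0 := by
        rw [h1]
        exact Finset.prod_ne_zero_iff.mpr (fun i hi => (Finset.mem_filter.mp hi).2)
      have hne2 : Es (fun i => w i ^ l) j₀ ≠ 0 := by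
        rw [h2]
        exact Finset.prod_ne_zero_iff.mpr
          (fun i hi => pow_ne_zero _ ((Finset.mem_filter.mp hi).2))
      simp [hne1, hne2]
  -- put everything together
  have hiff1 : (p : ℤ) ∣ e j₀ l ↔ (p : ℤ) ∣ N := by
    rw [heN]
    constructor
    · intro h
      have h9 : ((-1 : ℤ)) ^ j₀ * ((-1 : ℤ) ^ j₀ * N) = N := by
        rw [← mul_assoc, ← mul_pow]; norm_num
      exact h9 ▸ Dvd.dvd.mul_left h _
    · exact fun h => Dvd.dvd.mul_left h _
  have hiff2 : (p : ℤ) ∣ N ↔ Es (fun i => w i ^ l) j₀ = 0 := by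
    rw [hNK]
    exact (CharP.intCast_eq_zero_iff K p N).symm
  have hiff3 : (p : ℤ) ∣ e j₀ 1 ↔ Es w j₀ = 0 := by
    rw [hEsw j₀ hj₀, CharP.intCast_eq_zero_iff K p, hm]
    constructor
    · exact fun h => Dvd.dvd.mul_left h _
    · intro h
      have h9 : ((-1 : ℤ)) ^ j₀ * ((-1 : ℤ) ^ j₀ * e j₀ 1) = e j₀ 1 := by
        rw [← mul_assoc, ← mul_pow]; norm_num
      exact h9 ▸ Dvd.dvd.mul_left h _
  rw [hiff1, hiff2, hmain]
  exact hiff3.symm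
end

section
/- Let f(x) be a monic polynomial with integer coefficients whose constant coefficient f(0) is coprime to an integer m ≥ 2. Then there exist an integer k ≥ 1 and polynomials g(x), r(x) with integer coefficients such that f(x)·g(x) + m·r(x) = x^k − 1. -/
open Polynomial

theorem stmt_5 (f : Polynomial ℤ) (hf : f.Monic) (m : ℤ) (hm : 2 ≤ m)
    (hcop : Int.gcd (f.coeff 0) m = 1) :
    ∃ (k : ℕ), 1 ≤ k ∧ ∃ (g r : Polynomial ℤ),
      f * g + C m * r = X ^ k - 1 := by
  set n := m.toNat with hndef
  have hnm : (n : ℤ) = m := Int.toNat_of_nonneg (by linarith)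
  haveI : NeZero n := ⟨by omega⟩
  set φ : ℤ →+* ZMod n := Int.castRingHom (ZMod n) with hφ
  set F := f.map φ with hF
  have hFmon : F.Monic := hf.map φ
  -- AdjoinRoot F is finite
  haveI : Finite (AdjoinRoot F) := by
    let pb := AdjoinRoot.powerBasis' hFmon
    exact Finite.of_equiv _ pb.basis.equivFun.symm.toEquiv
  -- the root is a unit
  have hmk0 : AdjoinRoot.mk F F = 0 := AdjoinRoot.mk_self
  have hsplit : X * F.divX + C (F.coeff 0) = F := X_mul_divX_add F
  have heval : AdjoinRoot.root F * AdjoinRoot.mk F F.divX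
      + algebraMap (ZMod n) (AdjoinRoot F) (F.coeff 0) = 0 := by
    have h := congrArg (AdjoinRoot.mk F) hsplit
    rw [hmk0] at h
    rw [map_add, map_mul, AdjoinRoot.mk_X, AdjoinRoot.mk_C, ← AdjoinRoot.algebraMap_eq] at h
    exact h
  have hφm : φ m = 0 := by
    have : ((n : ℤ) : ZMod n) = 0 := by
      push_cast
      simp
    simpa [hφ, hnm] using this
  obtain ⟨u, v, huv⟩ := Int.isCoprime_iff_gcd_eq_one.mpr hcop
  have hc0unit : IsUnit (F.coeff 0) := by
    have hc : F.coeff 0 = φ (f.coeff 0) := by simp [hF]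
    have : φ u * φ (f.coeff 0) = 1 := by
      have := congrArg φ huv
      simpa [map_add, map_mul, hφm] using this
    rw [hc]
    exact IsUnit.of_mul_eq_one _ (by rw [mul_comm]; exact this)
  have hcunit : IsUnit (algebraMap (ZMod n) (AdjoinRoot F) (F.coeff 0)) :=
    hc0unit.map _
  have hrootunit : IsUnit (AdjoinRoot.root F) := by
    obtain ⟨c, hc⟩ := hcunit
    refine IsUnit.of_mul_eq_one (AdjoinRoot.mk F F.divX * (-(c⁻¹ : (AdjoinRoot F)ˣ) : (AdjoinRoot F)ˣ)) ?_
    have h1 : AdjoinRoot.root F * AdjoinRoot.mk F F.divX = -(c : AdjoinRoot F) := by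
      rw [← hc] at heval
      linear_combination heval
    calc AdjoinRoot.root F * (AdjoinRoot.mk F F.divX * (-(c⁻¹ : (AdjoinRoot F)ˣ) : (AdjoinRoot F)ˣ))
        = (AdjoinRoot.root F * AdjoinRoot.mk F F.divX) * (-(c⁻¹ : (AdjoinRoot F)ˣ) : (AdjoinRoot F)ˣ) := by ring
      _ = (-(c : AdjoinRoot F)) * (-(c⁻¹ : (AdjoinRoot F)ˣ) : (AdjoinRoot F)ˣ) := by rw [h1]
      _ = (c : AdjoinRoot F) * ((c⁻¹ : (AdjoinRoot F)ˣ) : AdjoinRoot F) := by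
          push_cast
          ring
      _ = 1 := by
          rw [← Units.val_mul, mul_inv_cancel, Units.val_one]
  obtain ⟨w, hw⟩ := hrootunit
  set k := orderOf w with hk
  have hk1 : 1 ≤ k := (orderOf_pos w)
  have hwk : w ^ k = 1 := pow_orderOf_eq_one w
  have hrk : AdjoinRoot.root F ^ k = 1 := by
    rw [← hw, ← Units.val_pow_eq_pow_val, hwk, Units.val_one]
  -- hence F ∣ (X^k - 1).map φ
  have hdvd : F ∣ (X ^ k - 1 : Polynomial ℤ).map φ := by
    rw [← AdjoinRoot.mk_eq_zero]
    have : AdjoinRoot.mk F ((X ^ k - 1 : Polynomial ℤ).map φ)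
        = AdjoinRoot.root F ^ k - 1 := by
      simp [Polynomial.map_sub, Polynomial.map_pow, Polynomial.map_one]
    rw [this, hrk, sub_self]
  obtain ⟨G, hG⟩ := hdvd
  obtain ⟨g, hg⟩ := Polynomial.map_surjective φ ZMod.intCast_surjective G
  have hzero : ((X ^ k - 1 : Polynomial ℤ) - f * g).map φ = 0 := by
    rw [Polynomial.map_sub, Polynomial.map_mul, hg, ← hF, hG, sub_self]
  have hCdvd : C m ∣ ((X ^ k - 1 : Polynomial ℤ) - f * g) := by
    rw [Polynomial.C_dvd_iff_dvd_coeff]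
    intro i
    have hcoeff : φ (((X ^ k - 1 : Polynomial ℤ) - f * g).coeff i) = 0 := by
      rw [← Polynomial.coeff_map, hzero, Polynomial.coeff_zero]
    have : (n : ℤ) ∣ ((X ^ k - 1 : Polynomial ℤ) - f * g).coeff i :=
      (ZMod.intCast_zmod_eq_zero_iff_dvd _ _).mp hcoeff
    rwa [hnm] at this
  obtain ⟨r, hr⟩ := hCdvd
  exact ⟨k, hk1, g, r, by linear_combination -hr⟩
end

section
/- Let A be a k×k primitive integer matrix, let λ be its Perron–Frobenius eigenvalue (so λ is a real eigenvalue of A and every complex eigenvalue μ ≠ λ of A satisfies |μ| < λ), let n be the degree of the minimal polynomial of λ over ℚ, and let w ∈ ℝ^k be a left λ-eigenvector of A all of whose entries are strictly positive (w·A = λ·w, where A acts via its real entries). Then there is a ℤ-submodule F of ℤ^k, of rank n, such that F is invariant under A (i.e., A·x ∈ F for all x ∈ F), the quotient group ℤ^k/F is free abelian, and the homomorphism ℤ^k → ℝ given by x ↦ w·x is injective on F. -/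
open Matrix Finset IntermediateField

set_option maxHeartbeats 1000000
set_option synthInstance.maxHeartbeats 400000

section Aux

lemma abs_sum_lt' {k : ℕ} (a : Fin k → ℝ) {p q : Fin k} (hp : 0 < a p) (hq : a q < 0) :
    |∑ j, a j| < ∑ j, |a j| := by
  rw [abs_lt]
  constructor
  · have : ∑ j, (-|a j|) < ∑ j, a j := by
      apply Finset.sum_lt_sum (fun i _ => neg_abs_le (a i))
      exact ⟨p, Finset.mem_univ p, by rw [abs_of_pos hp]; linarith⟩
    simpa [Finset.sum_neg_distrib] using this
  · apply Finset.sum_lt_sum (fun i _ => le_abs_self (a i))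
    exact ⟨q, Finset.mem_univ q, by rw [abs_of_neg hq]; linarith⟩

lemma pf_ne {k N : ℕ} (A : Matrix (Fin k) (Fin k) ℤ)
    (hN : ∀ i j, 0 < (A ^ N) i j) (lam : ℝ) (w : Fin k → ℝ)
    (hwpos : ∀ i, 0 < w i)
    (hw : w ᵥ* (A.map (Int.cast : ℤ → ℝ)) = lam • w)
    (y : Fin k → ℝ)
    (hy : (A.map (Int.cast : ℤ → ℝ)) *ᵥ y = lam • y)
    (hy0 : y ≠ 0) : (∑ i, w i * y i) ≠ 0 := by
  set M : Matrix (Fin k) (Fin k) ℝ := A.map (Int.cast : ℤ → ℝ) with hM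
  have hmappow : ∀ m : ℕ, (A ^ m).map (Int.cast : ℤ → ℝ) = M ^ m := by
    intro m
    have := RingHom.map_pow ((Int.castRingHom ℝ).mapMatrix) A m
    simpa [RingHom.mapMatrix_apply] using this
  have hwB : w ᵥ* (M ^ N) = lam ^ N • w := by
    clear hN; induction N with
    | zero => simp
    | succ m ih =>
        rw [pow_succ, ← vecMul_vecMul, ih, Matrix.smul_vecMul, hw, smul_smul, pow_succ]
  have hyB : (M ^ N) *ᵥ y = lam ^ N • y := by
    clear hN hwB; induction N with
    | zero => simp
    | succ m ih =>
        rw [pow_succ', ← mulVec_mulVec, ih, Matrix.mulVec_smul, hy, smul_smul, pow_succ',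
          mul_comm]
  set B : Matrix (Fin k) (Fin k) ℝ := M ^ N with hB
  have hBpos : ∀ i j, 0 < B i j := by
    intro i j
    have : B i j = ((A ^ N) i j : ℝ) := by rw [hB, ← hmappow]; rfl
    rw [this]; exact_mod_cast hN i j
  obtain ⟨i₀, hi₀⟩ := Function.ne_iff.mp hy0
  have hne : (Finset.univ : Finset (Fin k)).Nonempty := ⟨i₀, Finset.mem_univ i₀⟩
  have hmu : 0 < lam ^ N := by
    have h1 : (w ᵥ* B) i₀ = lam ^ N * w i₀ := by rw [hwB]; simp
    have h2 : (w ᵥ* B) i₀ = ∑ j, w j * B j i₀ := by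
      simp [vecMul, dotProduct]
    have h3 : 0 < ∑ j, w j * B j i₀ :=
      Finset.sum_pos (fun j _ => mul_pos (hwpos j) (hBpos j i₀)) hne
    have : 0 < lam ^ N * w i₀ := by rw [← h1, h2]; exact h3
    rcases mul_pos_iff.mp this with h | h
    · exact h.1
    · exact absurd (hwpos i₀) (not_lt.mpr h.2.le)
  intro h0
  have hp : ∃ p, 0 < y p := by
    by_contra h
    push_neg at h
    have : ∑ i, w i * y i < 0 := by
      have := Finset.sum_lt_sum (f := fun i => w i * y i) (g := fun _ => (0 : ℝ))
        (fun i _ => mul_nonpos_of_nonneg_of_nonpos (hwpos i).le (h i))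
        ⟨i₀, Finset.mem_univ i₀, by
          have : y i₀ < 0 := lt_of_le_of_ne (h i₀) hi₀
          exact mul_neg_of_pos_of_neg (hwpos i₀) this⟩
      simpa using this
    exact this.ne h0
  have hq : ∃ q, y q < 0 := by
    by_contra h
    push_neg at h
    have : 0 < ∑ i, w i * y i := by
      have := Finset.sum_lt_sum (f := fun _ => (0 : ℝ)) (g := fun i => w i * y i)
        (fun i _ => mul_nonneg (hwpos i).le (h i))
        ⟨i₀, Finset.mem_univ i₀, by
          have : 0 < y i₀ := lt_of_le_of_ne (h i₀) (Ne.symm hi₀)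
          exact mul_pos (hwpos i₀) this⟩
      simpa using this
    exact this.ne' h0
  obtain ⟨p, hyp⟩ := hp
  obtain ⟨q, hyq⟩ := hq
  set z : Fin k → ℝ := fun i => |y i| with hz
  have key : ∀ i, lam ^ N * z i < (B *ᵥ z) i := by
    intro i
    have h1 : lam ^ N * z i = |∑ j, B i j * y j| := by
      rw [hz]
      have : (B *ᵥ y) i = lam ^ N * y i := by rw [hyB]; simp
      rw [show (∑ j, B i j * y j) = (B *ᵥ y) i from rfl, this, abs_mul,
        abs_of_pos hmu]
    have h2 : (B *ᵥ z) i = ∑ j, |B i j * y j| := by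
      simp only [mulVec, dotProduct, hz]
      exact Finset.sum_congr rfl fun j _ => by
        rw [abs_mul, abs_of_pos (hBpos i j)]
    rw [h1, h2]
    exact abs_sum_lt' (fun j => B i j * y j)
      (mul_pos (hBpos i p) hyp) (mul_neg_of_pos_of_neg (hBpos i q) hyq)
  have lhs_eq : w ⬝ᵥ (B *ᵥ z) = lam ^ N * (w ⬝ᵥ z) := by
    rw [dotProduct_mulVec, hwB, smul_dotProduct]; rfl
  have lhs_gt : lam ^ N * (w ⬝ᵥ z) < w ⬝ᵥ (B *ᵥ z) := by
    have : ∑ i, w i * (lam ^ N * z i) < ∑ i, w i * (B *ᵥ z) i :=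
      Finset.sum_lt_sum_of_nonempty hne
        (fun i _ => mul_lt_mul_of_pos_left (key i) (hwpos i))
    calc lam ^ N * (w ⬝ᵥ z) = ∑ i, w i * (lam ^ N * z i) := by
          rw [dotProduct, Finset.mul_sum]
          exact Finset.sum_congr rfl fun i _ => by ring
      _ < ∑ i, w i * (B *ᵥ z) i := this
      _ = w ⬝ᵥ (B *ᵥ z) := rfl
  rw [lhs_eq] at lhs_gt
  exact lt_irrefl _ lhs_gt

end Aux

theorem stmt_7 {k : ℕ} (A : Matrix (Fin k) (Fin k) ℤ)
    (hprim : ∃ N : ℕ, 0 < N ∧ ∀ i j, 0 < (A ^ N) i j)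
    (lam : ℝ)
    (heig : ∃ v : Fin k → ℝ, v ≠ 0 ∧ (A.map (Int.cast : ℤ → ℝ)) *ᵥ v = lam • v)
    (hmax : ∀ μ : ℂ, μ ≠ (lam : ℂ) →
      (∃ u : Fin k → ℂ, u ≠ 0 ∧ (A.map (Int.cast : ℤ → ℂ)) *ᵥ u = μ • u) →
      ‖μ‖ < lam)
    (n : ℕ) (hndeg : n = (minpoly ℚ lam).natDegree)
    (w : Fin k → ℝ) (hwpos : ∀ i, 0 < w i)
    (hw : w ᵥ* (A.map (Int.cast : ℤ → ℝ)) = lam • w) :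
    ∃ F : Submodule ℤ (Fin k → ℤ),
      (∀ x ∈ F, A *ᵥ x ∈ F) ∧
      Module.finrank ℤ F = n ∧
      Module.Free ℤ ((Fin k → ℤ) ⧸ F) ∧
      (∀ x ∈ F, (∑ i, w i * (x i : ℝ)) = 0 → x = 0) := by
  classical
  obtain ⟨N, hNpos, hN⟩ := hprim
  obtain ⟨v₀, hv₀ne, hv₀⟩ := heig
  -- lam is algebraic over ℚ
  have hdetR : (A.map (Int.cast : ℤ → ℝ) - lam • 1).det = 0 := by
    rw [← Matrix.exists_mulVec_eq_zero_iff]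
    refine ⟨v₀, hv₀ne, ?_⟩
    rw [Matrix.sub_mulVec, Matrix.smul_mulVec, Matrix.one_mulVec, hv₀, sub_self]
  have hint : IsIntegral ℚ lam := by
    have hmm : (A.map (Int.cast : ℤ → ℚ)).map (algebraMap ℚ ℝ) = A.map (Int.cast : ℤ → ℝ) := by
      ext i j; simp [Matrix.map_apply]
    have heval2 : Polynomial.eval lam ((A.map (Int.cast : ℤ → ℝ)).charpoly) = 0 := by
      have h1 : Polynomial.eval lam (A.map (Int.cast : ℤ → ℝ)).charpoly =
          ((charmatrix (A.map (Int.cast : ℤ → ℝ))).map (Polynomial.evalRingHom lam)).det := by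
        rw [Matrix.charpoly, ← RingHom.mapMatrix_apply]
        exact RingHom.map_det (Polynomial.evalRingHom lam)
          (charmatrix (A.map (Int.cast : ℤ → ℝ)))
      have h2 : (charmatrix (A.map (Int.cast : ℤ → ℝ))).map (Polynomial.evalRingHom lam) =
          lam • 1 - A.map (Int.cast : ℤ → ℝ) := by
        ext i j
        by_cases h : i = j
        · subst h
          simp [Matrix.map_apply, charmatrix_apply_eq, Matrix.sub_apply, Matrix.smul_apply,
            Matrix.one_apply_eq]
        · simp [Matrix.map_apply, charmatrix_apply_ne _ _ _ h, Matrix.sub_apply,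
            Matrix.smul_apply, Matrix.one_apply_ne h]
      have h3 : lam • (1 : Matrix (Fin k) (Fin k) ℝ) - A.map (Int.cast : ℤ → ℝ) =
          -(A.map (Int.cast : ℤ → ℝ) - lam • 1) := by rw [neg_sub]
      rw [h1, h2, h3, Matrix.det_neg, hdetR, mul_zero]
    have halg : IsAlgebraic ℚ lam := by
      refine ⟨(A.map (Int.cast : ℤ → ℚ)).charpoly, (Matrix.charpoly_monic _).ne_zero, ?_⟩
      rw [Polynomial.aeval_def, Polynomial.eval₂_eq_eval_map, ← Matrix.charpoly_map, hmm]
      exact heval2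
    exact halg.isIntegral
  set K : IntermediateField ℚ ℝ := ℚ⟮lam⟯ with hK
  set θ : K := IntermediateField.AdjoinSimple.gen ℚ lam with hθ
  haveI : FiniteDimensional ℚ K := IntermediateField.adjoin.finiteDimensional hint
  have hθR : (algebraMap K ℝ) θ = lam := IntermediateField.AdjoinSimple.algebraMap_gen ℚ lam
  -- eigenvector over K
  have hdetK : (A.map (Int.cast : ℤ → K) - θ • 1).det = 0 := by
    have hinj : Function.Injective (algebraMap K ℝ) := (algebraMap K ℝ).injective
    rw [← map_eq_zero_iff (algebraMap K ℝ) hinj, RingHom.map_det, RingHom.mapMatrix_apply]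
    have hmap : (A.map (Int.cast : ℤ → K) - θ • 1).map (algebraMap K ℝ) =
        A.map (Int.cast : ℤ → ℝ) - lam • 1 := by
      ext i j
      by_cases h : i = j
      · subst h
        have hθR' : (θ : ℝ) = lam := hθR
        simp [Matrix.map_apply, Matrix.sub_apply, Matrix.smul_apply, Matrix.one_apply_eq,
          map_intCast, hθR']
      · simp [Matrix.map_apply, Matrix.sub_apply, Matrix.smul_apply, Matrix.one_apply_ne h,
          map_intCast]
    rw [hmap, hdetR]
  obtain ⟨v, hvne, hveq⟩ : ∃ v : Fin k → K, v ≠ 0 ∧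
      (A.map (Int.cast : ℤ → K)) *ᵥ v = θ • v := by
    obtain ⟨v, hvne, hveq⟩ := Matrix.exists_mulVec_eq_zero_iff.mpr hdetK
    refine ⟨v, hvne, ?_⟩
    rwa [Matrix.sub_mulVec, Matrix.smul_mulVec, Matrix.one_mulVec, sub_eq_zero] at hveq
  have hvrow : ∀ i, (∑ j, (A i j : K) * v j) = θ * v i := by
    intro i
    have := congrFun hveq i
    simpa [Matrix.mulVec, dotProduct, Matrix.map_apply] using this
  -- trace and the map Θ
  set T : K →ₗ[ℚ] ℚ := Algebra.trace ℚ K with hT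
  set Θ : K →ₗ[ℚ] (Fin k → ℚ) :=
    LinearMap.pi (fun i => T ∘ₗ (LinearMap.mulLeft ℚ (v i))) with hΘ
  have hΘapp : ∀ (t : K) (i), Θ t i = T (v i * t) := fun t i => rfl
  have hTcast : ∀ (a : ℤ) (x : K), (a : ℚ) * T x = T ((a : K) * x) := by
    intro a x
    rw [← map_intCast (algebraMap ℚ K) a, ← Algebra.smul_def, _root_.map_smul, smul_eq_mul]
  have hΘA : ∀ t : K, (A.map (Int.cast : ℤ → ℚ)) *ᵥ (Θ t) = Θ (θ * t) := by
    intro t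
    funext i
    have : ((A.map (Int.cast : ℤ → ℚ)) *ᵥ (Θ t)) i = ∑ j, (A i j : ℚ) * T (v j * t) := by
      simp [Matrix.mulVec, dotProduct, hΘapp, Matrix.map_apply]
    rw [this, hΘapp]
    calc ∑ j, (A i j : ℚ) * T (v j * t)
        = ∑ j, T ((A i j : K) * (v j * t)) :=
          Finset.sum_congr rfl fun j _ => hTcast _ _
      _ = T (∑ j, (A i j : K) * (v j * t)) := (map_sum T _ _).symm
      _ = T ((∑ j, (A i j : K) * v j) * t) := by rw [Finset.sum_mul]; simp only [mul_assoc]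
      _ = T (v i * (θ * t)) := by rw [hvrow i]; ring_nf
  -- injectivity of Θ
  have hΘinj : ∀ t : K, Θ t = 0 → t = 0 := by
    intro t ht
    have h0 : ∀ i, T (v i * t) = 0 := by
      intro i
      have := congrFun ht i
      rwa [hΘapp] at this
    have hpow : ∀ (m : ℕ) (i : Fin k), T (θ ^ m * (v i * t)) = 0 := by
      intro m
      induction m with
      | zero => intro i; simpa using h0 i
      | succ m ih =>
          intro i
          have hexp : θ ^ (m + 1) * (v i * t) = ∑ j, (A i j : K) * (θ ^ m * (v j * t)) := by
            calc θ ^ (m + 1) * (v i * t) = θ ^ m * ((θ * v i) * t) := by ring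
              _ = θ ^ m * ((∑ j, (A i j : K) * v j) * t) := by rw [hvrow i]
              _ = ∑ j, (A i j : K) * (θ ^ m * (v j * t)) := by
                  rw [Finset.sum_mul, Finset.mul_sum]
                  exact Finset.sum_congr rfl fun j _ => by ring
          rw [hexp, map_sum]
          refine Finset.sum_eq_zero fun j _ => ?_
          rw [← hTcast, ih j, mul_zero]
    obtain ⟨i₁, hi₁⟩ := Function.ne_iff.mp hvne
    have hvi : v i₁ ≠ 0 := by simpa using hi₁
    have hall : ∀ s : K, T (s * t) = 0 := by
      intro s
      obtain ⟨f, hf⟩ := (IntermediateField.adjoin.powerBasis hint).exists_eq_aeval' (s / v i₁)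
      have hsv : s = (Polynomial.aeval θ f) * v i₁ := by
        have : Polynomial.aeval (IntermediateField.adjoin.powerBasis hint).gen f = s / v i₁ :=
          hf.symm
        have hgen : (IntermediateField.adjoin.powerBasis hint).gen = θ := rfl
        rw [hgen] at this
        rw [this, div_mul_cancel₀ _ hvi]
      have hexp : s * t = ∑ m ∈ Finset.range (f.natDegree + 1),
          f.coeff m • (θ ^ m * (v i₁ * t)) := by
        calc s * t = (∑ m ∈ Finset.range (f.natDegree + 1), f.coeff m • θ ^ m) * (v i₁ * t) := by
              rw [← Polynomial.aeval_eq_sum_range, hsv]; ring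
          _ = ∑ m ∈ Finset.range (f.natDegree + 1), f.coeff m • (θ ^ m * (v i₁ * t)) := by
              rw [Finset.sum_mul]
              exact Finset.sum_congr rfl fun m _ => smul_mul_assoc _ _ _
      rw [hexp, map_sum]
      refine Finset.sum_eq_zero fun m _ => ?_
      rw [_root_.map_smul, hpow m i₁, smul_zero]
    haveI : Algebra.IsSeparable ℚ K := inferInstance
    have hnd := traceForm_nondegenerate ℚ K
    have := hnd.1 t ?_
    · exact this
    · intro s
      have : Algebra.traceForm ℚ K t s = T (s * t) := by
        rw [Algebra.traceForm_apply]
        rw [mul_comm]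
      rw [this]
      exact hall s
  -- the coefficient map ι : ℤ^k → ℚ^k
  set ι : (Fin k → ℤ) →ₗ[ℤ] (Fin k → ℚ) :=
    { toFun := fun x i => (x i : ℚ)
      map_add' := by
        intro x y; funext i
        simp only [Pi.add_apply]; push_cast; ring
      map_smul' := by
        intro c x; funext i
        simp only [Pi.smul_apply, smul_eq_mul, RingHom.id_apply, zsmul_eq_mul]; push_cast; ring } with hι
  have hιapp : ∀ (x : Fin k → ℤ) (i), ι x i = (x i : ℚ) := fun x i => rfl
  have hιinj : Function.Injective ι := by
    intro x y hxy
    funext i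
    have h := congrFun hxy i
    rw [hιapp, hιapp] at h
    exact_mod_cast h
  set V : Submodule ℚ (Fin k → ℚ) := LinearMap.range Θ with hV
  set F : Submodule ℤ (Fin k → ℤ) := (V.restrictScalars ℤ).comap ι with hF
  have hmemF : ∀ x, x ∈ F ↔ ∃ t, Θ t = ι x := by
    intro x
    simp [hF, Submodule.mem_comap, LinearMap.mem_range, hV]
  refine ⟨F, ?_, ?_, ?_, ?_⟩
  · -- invariance
    intro x hx
    obtain ⟨t, ht⟩ := (hmemF x).mp hx
    rw [hmemF]
    refine ⟨θ * t, ?_⟩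
    have : ι (A *ᵥ x) = (A.map (Int.cast : ℤ → ℚ)) *ᵥ (ι x) := by
      funext i
      simp [hιapp, Matrix.mulVec, dotProduct, Matrix.map_apply]
    rw [this, ← ht, hΘA]
  · -- rank
    have hΘinj' : Function.Injective Θ := by
      intro a b hab
      exact sub_eq_zero.mp (hΘinj (a - b) (by rw [map_sub, hab, sub_self]))
    have hVrank : Module.finrank ℚ V = n := by
      rw [hV, LinearMap.finrank_range_of_inj hΘinj', hndeg]
      exact IntermediateField.adjoin.finrank hint
    haveI : Module.Finite ℤ F := inferInstance
    haveI : Module.Free ℤ F := inferInstance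
    refine le_antisymm ?_ ?_
    · -- upper bound
      rw [← hVrank]
      set b := Module.Free.chooseBasis ℤ F with hb
      have hb1 : LinearIndependent ℤ (fun j => ι (F.subtype (b j))) := by
        refine b.linearIndependent.map' (ι.comp F.subtype) ?_
        exact LinearMap.ker_eq_bot.mpr (hιinj.comp F.injective_subtype)
      have hb2 : LinearIndependent ℚ (fun j => ι (F.subtype (b j))) :=
        (LinearIndependent.iff_fractionRing ℤ ℚ).mp hb1
      have hbmem : ∀ j, ι (F.subtype (b j)) ∈ V := fun j => (b j).2
      have hb3 : LinearIndependent ℚ (fun j => (⟨ι (F.subtype (b j)), hbmem j⟩ : V)) := by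
        apply LinearIndependent.of_comp V.subtype
        exact hb2
      have hcard := hb3.fintype_card_le_finrank
      rwa [Module.finrank_eq_card_chooseBasisIndex ℤ F]
    · -- lower bound
      have hKrank : Module.finrank ℚ K = n := by
        rw [hndeg]; exact IntermediateField.adjoin.finrank hint
      set bK := Module.finBasis ℚ K with hbK
      obtain ⟨d, hd⟩ := IsLocalization.exist_integer_multiples_of_finite
        (nonZeroDivisors ℤ) (fun p : Fin (Module.finrank ℚ K) × Fin k => Θ (bK p.1) p.2)
      choose g hg using hd
      set x : Fin (Module.finrank ℚ K) → (Fin k → ℤ) := fun j i => g (j, i) with hxdef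
      have hdne : ((d : ℤ) : ℚ) ≠ 0 :=
        Int.cast_ne_zero.mpr (nonZeroDivisors.ne_zero d.2)
      have hx : ∀ j, ι (x j) = ((d : ℤ) : ℚ) • Θ (bK j) := by
        intro j
        funext i
        have := hg (j, i)
        rw [hιapp]
        simp only [Pi.smul_apply, smul_eq_mul]
        rw [show ((x j i : ℚ)) = algebraMap ℤ ℚ (g (j, i)) from rfl, this]
        simp [zsmul_eq_mul]
      have hxF : ∀ j, x j ∈ F := by
        intro j
        rw [hmemF]
        exact ⟨((d : ℤ) : ℚ) • bK j, by rw [_root_.map_smul, hx]⟩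
      have h1 : LinearIndependent ℚ (fun j => Θ (bK j)) :=
        bK.linearIndependent.map' Θ (LinearMap.ker_eq_bot.mpr hΘinj')
      have h2 : LinearIndependent ℚ (fun j => ι (x j)) := by
        have := h1.units_smul (fun _ => Units.mk0 _ hdne)
        convert this using 1
        funext j
        rw [hx j]
        rfl
      have hliZ : LinearIndependent ℤ (fun j => ι (x j)) :=
        (LinearIndependent.iff_fractionRing ℤ ℚ).mpr h2
      have hliF : LinearIndependent ℤ (fun j => (⟨x j, hxF j⟩ : F)) := by
        apply LinearIndependent.of_comp (ι.comp F.subtype)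
        exact hliZ
      have := hliF.fintype_card_le_finrank
      simpa [hKrank] using this
  · -- free quotient
    haveI : NoZeroSMulDivisors ℤ ((Fin k → ℤ) ⧸ F) := by
      refine ⟨fun {c m} hcm => ?_⟩
      by_cases hc : c = 0
      · exact Or.inl hc
      · right
        obtain ⟨x, rfl⟩ := Submodule.Quotient.mk_surjective F m
        rw [← Submodule.Quotient.mk_smul, Submodule.Quotient.mk_eq_zero] at hcm
        obtain ⟨t, ht⟩ := (hmemF _).mp hcm
        rw [Submodule.Quotient.mk_eq_zero, hmemF]
        refine ⟨(c : ℚ)⁻¹ • t, ?_⟩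
        have hcast : ι (c • x) = (c : ℚ) • ι x := by
          funext i
          rw [hιapp]
          simp only [Pi.smul_apply, smul_eq_mul, zsmul_eq_mul, hιapp]
          push_cast
          ring
        rw [_root_.map_smul, ht, hcast, inv_smul_smul₀ (Int.cast_ne_zero.mpr hc)]
    infer_instance
  · -- injectivity of w-pairing
    intro x hxF hx0
    obtain ⟨t, ht⟩ := (hmemF x).mp hxF
    set y : Fin k → ℝ := fun i => (v i : ℝ) with hy
    have hterm : ∀ i j, (algebraMap K ℝ) ((A i j : K) * v j) = (A i j : ℝ) * (v j : ℝ) := by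
      intro i j
      rw [_root_.map_mul, map_intCast]
      rfl
    have hyeig : (A.map (Int.cast : ℤ → ℝ)) *ᵥ y = lam • y := by
      funext i
      calc ((A.map (Int.cast : ℤ → ℝ)) *ᵥ y) i = ∑ j, (A i j : ℝ) * (v j : ℝ) := by
            simp [Matrix.mulVec, dotProduct, Matrix.map_apply, hy]
        _ = algebraMap K ℝ (∑ j, (A i j : K) * v j) := by
            rw [map_sum]
            exact (Finset.sum_congr rfl fun j _ => hterm i j).symm
        _ = algebraMap K ℝ (θ * v i) := by rw [hvrow i]
        _ = lam * (v i : ℝ) := by rw [_root_.map_mul, hθR]; rfl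
        _ = (lam • y) i := rfl
    have hyne : y ≠ 0 := by
      obtain ⟨i₂, hi₂⟩ := Function.ne_iff.mp hvne
      intro h
      apply hi₂
      have h2 := congrFun h i₂
      simp only [hy, Pi.zero_apply] at h2
      simpa using (ZeroMemClass.coe_eq_zero.mp h2)
    have hwv : (∑ i, w i * y i) ≠ 0 := pf_ne A hN lam w hwpos hw y hyeig hyne
    haveI : Algebra.IsSeparable ℚ K := inferInstance
    set σ₀ : K →ₐ[ℚ] ℂ := ((Complex.ofRealAm.restrictScalars ℚ).comp K.val) with hσ₀
    have hσ₀app : ∀ s : K, σ₀ s = ((s : ℝ) : ℂ) := fun s => rfl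
    have hσ₀θ : σ₀ θ = (lam : ℂ) := by
      rw [hσ₀app]
      norm_cast
    have hgenK : ∀ (σ : K →ₐ[ℚ] ℂ), σ ≠ σ₀ → σ θ ≠ (lam : ℂ) := by
      intro σ hσ h
      apply hσ
      apply PowerBasis.algHom_ext (IntermediateField.adjoin.powerBasis hint)
      have hgen : (IntermediateField.adjoin.powerBasis hint).gen = θ := rfl
      show σ θ = σ₀ θ
      rw [h, hσ₀θ]
    have hcs : ∀ (σ : K →ₐ[ℚ] ℂ), σ ≠ σ₀ → (∑ i, (w i : ℂ) * σ (v i)) = 0 := by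
      intro σ hσ
      have heigc : ∀ i, (∑ j, (A i j : ℂ) * σ (v j)) = σ θ * σ (v i) := by
        intro i
        have h := congrArg σ (hvrow i)
        rw [map_sum, _root_.map_mul] at h
        calc (∑ j, (A i j : ℂ) * σ (v j)) = ∑ j, σ ((A i j : K) * v j) := by
              refine Finset.sum_congr rfl fun j _ => ?_
              rw [_root_.map_mul, map_intCast]
          _ = σ θ * σ (v i) := h
      have hrow : ∀ j, (∑ i, (w i : ℂ) * (A i j : ℂ)) = (lam : ℂ) * (w j : ℂ) := by
        intro j
        have h := congrFun hw j
        have h2 : (∑ i, w i * (A i j : ℝ)) = lam * w j := by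
          simpa [Matrix.vecMul, dotProduct, Matrix.map_apply] using h
        calc (∑ i, (w i : ℂ) * (A i j : ℂ)) = (((∑ i, w i * (A i j : ℝ)) : ℝ) : ℂ) := by
              push_cast
              rfl
          _ = (lam : ℂ) * (w j : ℂ) := by rw [h2]; push_cast; rfl
      have hswap : (∑ i, (w i : ℂ) * (∑ j, (A i j : ℂ) * σ (v j)))
          = (lam : ℂ) * ∑ i, (w i : ℂ) * σ (v i) := by
        calc (∑ i, (w i : ℂ) * (∑ j, (A i j : ℂ) * σ (v j)))
            = ∑ i, ∑ j, (w i : ℂ) * ((A i j : ℂ) * σ (v j)) := by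
              exact Finset.sum_congr rfl fun i _ => Finset.mul_sum _ _ _
          _ = ∑ j, ∑ i, (w i : ℂ) * ((A i j : ℂ) * σ (v j)) := Finset.sum_comm
          _ = ∑ j, (∑ i, (w i : ℂ) * (A i j : ℂ)) * σ (v j) := by
              refine Finset.sum_congr rfl fun j _ => ?_
              rw [Finset.sum_mul]
              exact Finset.sum_congr rfl fun i _ => by ring
          _ = ∑ j, ((lam : ℂ) * (w j : ℂ)) * σ (v j) := by
              exact Finset.sum_congr rfl fun j _ => by rw [hrow j]
          _ = (lam : ℂ) * ∑ j, (w j : ℂ) * σ (v j) := by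
              rw [Finset.mul_sum]
              exact Finset.sum_congr rfl fun j _ => by ring
      have hswap2 : (∑ i, (w i : ℂ) * (∑ j, (A i j : ℂ) * σ (v j)))
          = σ θ * ∑ i, (w i : ℂ) * σ (v i) := by
        rw [Finset.mul_sum]
        exact Finset.sum_congr rfl fun i _ => by rw [heigc i]; ring
      have hzero : (σ θ - (lam : ℂ)) * (∑ i, (w i : ℂ) * σ (v i)) = 0 := by
        rw [sub_mul, ← hswap2, hswap]
        ring
      rcases mul_eq_zero.mp hzero with h | h
      · exact absurd (sub_eq_zero.mp h) (hgenK σ hσ)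
      · exact h
    have hc0 : (∑ i, (w i : ℂ) * σ₀ (v i)) = (((∑ i, w i * y i) : ℝ) : ℂ) := by
      push_cast
      exact Finset.sum_congr rfl fun i _ => by rw [hσ₀app]
    have hxt : ∀ i, (x i : ℚ) = T (v i * t) := by
      intro i
      have := congrFun ht i
      rw [hΘapp] at this
      exact this.symm
    have hmain : ((0 : ℝ) : ℂ) = σ₀ t * (∑ i, (w i : ℂ) * σ₀ (v i)) := by
      calc ((0 : ℝ) : ℂ) = (((∑ i, w i * (x i : ℝ)) : ℝ) : ℂ) := by rw [hx0]
        _ = ∑ i, (w i : ℂ) * algebraMap ℚ ℂ ((x i : ℚ)) := by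
            push_cast [eq_ratCast]
            rfl
        _ = ∑ i, (w i : ℂ) * algebraMap ℚ ℂ (T (v i * t)) := by
            exact Finset.sum_congr rfl fun i _ => by rw [hxt i]
        _ = ∑ i, (w i : ℂ) * (∑ σ : K →ₐ[ℚ] ℂ, σ (v i * t)) := by
            refine Finset.sum_congr rfl fun i _ => ?_
            rw [hT, trace_eq_sum_embeddings]
        _ = ∑ i, ∑ σ : K →ₐ[ℚ] ℂ, (w i : ℂ) * σ (v i * t) := by
            exact Finset.sum_congr rfl fun i _ => Finset.mul_sum _ _ _
        _ = ∑ σ : K →ₐ[ℚ] ℂ, ∑ i, (w i : ℂ) * σ (v i * t) := Finset.sum_comm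
        _ = ∑ σ : K →ₐ[ℚ] ℂ, σ t * (∑ i, (w i : ℂ) * σ (v i)) := by
            refine Finset.sum_congr rfl fun σ _ => ?_
            rw [Finset.mul_sum]
            exact Finset.sum_congr rfl fun i _ => by rw [_root_.map_mul]; ring
        _ = σ₀ t * (∑ i, (w i : ℂ) * σ₀ (v i)) := by
            refine Finset.sum_eq_single σ₀ (fun σ _ hσ => by rw [hcs σ hσ, mul_zero])
              (fun h => absurd (Finset.mem_univ σ₀) h)
    rw [hc0] at hmain
    have ht0 : σ₀ t = 0 := by
      rcases mul_eq_zero.mp hmain.symm with h | h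
      · exact h
      · exact absurd h (Complex.ofReal_ne_zero.mpr hwv)
    have htz : t = 0 := by
      have hinj : Function.Injective σ₀ := σ₀.toRingHom.injective
      exact hinj (by rw [ht0, map_zero])
    apply hιinj
    rw [← ht, htz, map_zero, map_zero]
end

section
/- Let A be a k×k primitive integer matrix and let λ be its Perron–Frobenius eigenvalue (so λ is a real eigenvalue of A and every complex eigenvalue μ ≠ λ of A satisfies |μ| < λ). Then there exists a nonzero right λ-eigenvector v ∈ ℝ^k of A (A·v = λ·v, where A acts via its real entries) all of whose entries lie in the field ℚ(λ) ⊆ ℝ and whose entries span ℚ(λ) as a vector space over ℚ. The same holds for a left λ-eigenvector. -/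
open Matrix IntermediateField

set_option synthInstance.maxHeartbeats 1000000
set_option maxHeartbeats 1000000

/-- Evaluation of the characteristic polynomial. -/
lemma aux_eval_charpoly {k : ℕ} {F : Type*} [Field F] (M : Matrix (Fin k) (Fin k) F) (x : F) :
    M.charpoly.eval x = (x • (1 : Matrix (Fin k) (Fin k) F) - M).det := by
  have h : M.charpoly.eval x = Polynomial.evalRingHom x M.charmatrix.det := rfl
  rw [h, RingHom.map_det, RingHom.mapMatrix_apply]
  congr 1
  ext i j
  by_cases hij : i = j
  · subst hij
    simp [Matrix.charmatrix_apply_eq]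
  · simp [Matrix.charmatrix_apply_ne _ _ _ hij, Matrix.one_apply_ne hij]

/-- Key lemma: if `det (lam • 1 - A) = 0` over ℝ and `lam` is integral over ℚ, then there is an
eigenvector with entries in `ℚ⟮lam⟯` spanning it over ℚ. -/
lemma aux_key {k : ℕ} (A : Matrix (Fin k) (Fin k) ℤ) (lam : ℝ)
    (hint : IsIntegral ℚ lam)
    (hdet : (lam • (1 : Matrix (Fin k) (Fin k) ℝ) - A.map (Int.cast : ℤ → ℝ)).det = 0) :
    ∃ v : Fin k → ℝ, v ≠ 0 ∧ (A.map (Int.cast : ℤ → ℝ)) *ᵥ v = lam • v ∧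
      (∀ i, v i ∈ ℚ⟮lam⟯) ∧
      Submodule.span ℚ (Set.range v) = Subalgebra.toSubmodule (ℚ⟮lam⟯).toSubalgebra := by
  set K := ℚ⟮lam⟯
  set lam' : K := ⟨lam, mem_adjoin_simple_self ℚ lam⟩ with hlam'
  set B : Matrix (Fin k) (Fin k) K := A.map (Int.cast : ℤ → K) with hB
  set M : Matrix (Fin k) (Fin k) K := lam' • (1 : Matrix (Fin k) (Fin k) K) - B with hM
  have hmap : M.map (algebraMap K ℝ) = lam • 1 - A.map (Int.cast : ℤ → ℝ) := by
    ext i j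
    by_cases hij : i = j
    · subst hij
      simp [hM, hB, Matrix.one_apply, hlam']
    · simp [hM, hB, Matrix.one_apply_ne hij]
  have hMdet : M.det = 0 := by
    have h1 : algebraMap K ℝ M.det = 0 := by
      rw [RingHom.map_det, RingHom.mapMatrix_apply, hmap, hdet]
    exact (map_eq_zero_iff _ (algebraMap K ℝ).injective).mp h1
  obtain ⟨u, hu0, huM⟩ := (Matrix.exists_mulVec_eq_zero_iff (M := M)).mpr hMdet
  have heigK : B *ᵥ u = lam' • u := by
    have h := huM
    rw [hM, Matrix.sub_mulVec, Matrix.smul_mulVec, Matrix.one_mulVec, sub_eq_zero] at h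
    exact h.symm
  set v : Fin k → ℝ := fun i => (u i : ℝ) with hv
  have hvmem : ∀ i, v i ∈ K := fun i => (u i).2
  have hv0 : v ≠ 0 := by
    intro h
    apply hu0
    funext i
    exact Subtype.ext (congrFun h i)
  have heigR : (A.map (Int.cast : ℤ → ℝ)) *ᵥ v = lam • v := by
    funext i
    have h := congrArg (fun x : K => (x : ℝ)) (congrFun heigK i)
    simp only [Matrix.mulVec, dotProduct, Matrix.map_apply, Pi.smul_apply,
      smul_eq_mul] at h ⊢
    push_cast at h
    convert h using 2 <;> simp [hlam', hv, hB]
  refine ⟨v, hv0, heigR, hvmem, ?_⟩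
  apply le_antisymm
  · rw [Submodule.span_le]
    rintro x ⟨i, rfl⟩
    exact hvmem i
  · obtain ⟨i0, hi0⟩ : ∃ i, v i ≠ 0 := by
      by_contra h
      push_neg at h
      exact hv0 (funext h)
    have hpow : ∀ (n : ℕ) (j : Fin k), lam ^ n * v j ∈ Submodule.span ℚ (Set.range v) := by
      intro n
      induction n with
      | zero =>
        intro j
        simpa using Submodule.subset_span (Set.mem_range_self (f := v) j)
      | succ n ih =>
        intro j
        have hstep : lam * v j = ∑ m, ((A j m : ℝ)) * v m := by
          have h := congrFun heigR j
          simp only [Matrix.mulVec, dotProduct, Matrix.map_apply, Pi.smul_apply,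
            smul_eq_mul] at h
          rw [← h]
        have hcalc : lam ^ (n + 1) * v j = ∑ m, (A j m : ℚ) • (lam ^ n * v m) := by
          have h1 : lam ^ (n + 1) * v j = lam ^ n * (lam * v j) := by ring
          rw [h1, hstep, Finset.mul_sum]
          refine Finset.sum_congr rfl fun m _ => ?_
          push_cast [Rat.smul_def]
          ring
        rw [hcalc]
        exact Submodule.sum_mem _ fun m _ => Submodule.smul_mem _ _ (ih m)
    intro x hx
    have hxK : x ∈ K := hx
    set c : K := ⟨x, hxK⟩ * (u i0)⁻¹ with hc
    have hcK : (c : ℝ) ∈ Algebra.adjoin ℚ ({lam} : Set ℝ) := by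
      rw [← IntermediateField.adjoin_simple_toSubalgebra_of_isAlgebraic hint.isAlgebraic]
      exact c.2
    rw [Algebra.adjoin_singleton_eq_range_aeval] at hcK
    obtain ⟨p, hp⟩ := hcK
    have hp' : (Polynomial.aeval lam) p = (c : ℝ) := hp
    have hco : (c : ℝ) = x * (v i0)⁻¹ := by
      have h : (c : ℝ) = algebraMap K ℝ c := rfl
      rw [h, hc, _root_.map_mul, map_inv₀]
      rfl
    have hxc : x = (c : ℝ) * v i0 := by
      rw [hco, mul_assoc, inv_mul_cancel₀ hi0, mul_one]
    have hsum : (Polynomial.aeval lam p : ℝ) =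
        ∑ n ∈ Finset.range (p.natDegree + 1), p.coeff n • lam ^ n :=
      Polynomial.aeval_eq_sum_range lam
    rw [hxc, ← hp', hsum, Finset.sum_mul]
    refine Submodule.sum_mem _ fun n _ => ?_
    rw [smul_mul_assoc]
    exact Submodule.smul_mem _ _ (hpow n i0)

theorem stmt_8 {k : ℕ} (A : Matrix (Fin k) (Fin k) ℤ)
    (hprim : ∃ N : ℕ, 0 < N ∧ ∀ i j, 0 < (A ^ N) i j)
    (lam : ℝ)
    (heig : ∃ v : Fin k → ℝ, v ≠ 0 ∧ (A.map (Int.cast : ℤ → ℝ)) *ᵥ v = lam • v)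
    (hmax : ∀ μ : ℂ, μ ≠ (lam : ℂ) →
      (∃ u : Fin k → ℂ, u ≠ 0 ∧ (A.map (Int.cast : ℤ → ℂ)) *ᵥ u = μ • u) →
      ‖μ‖ < lam) :
    (∃ v : Fin k → ℝ, v ≠ 0 ∧ (A.map (Int.cast : ℤ → ℝ)) *ᵥ v = lam • v ∧
      (∀ i, v i ∈ ℚ⟮lam⟯) ∧
      Submodule.span ℚ (Set.range v) = Subalgebra.toSubmodule (ℚ⟮lam⟯).toSubalgebra) ∧
    (∃ w : Fin k → ℝ, w ≠ 0 ∧ w ᵥ* (A.map (Int.cast : ℤ → ℝ)) = lam • w ∧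
      (∀ i, w i ∈ ℚ⟮lam⟯) ∧
      Submodule.span ℚ (Set.range w) = Subalgebra.toSubmodule (ℚ⟮lam⟯).toSubalgebra) := by
  obtain ⟨v, hv0, hveig⟩ := heig
  have hdet : (lam • (1 : Matrix (Fin k) (Fin k) ℝ) - A.map (Int.cast : ℤ → ℝ)).det = 0 := by
    rw [← Matrix.exists_mulVec_eq_zero_iff]
    refine ⟨v, hv0, ?_⟩
    rw [Matrix.sub_mulVec, Matrix.smul_mulVec, Matrix.one_mulVec, hveig, sub_self]
  have hint : IsIntegral ℚ lam := by
    refine ⟨(A.charpoly).map (Int.castRingHom ℚ), (A.charpoly_monic).map _, ?_⟩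
    have h2 : A.map (Int.cast : ℤ → ℝ) = A.map (Int.castRingHom ℝ) := rfl
    have h1 : Polynomial.aeval lam ((A.charpoly).map (Int.castRingHom ℚ)) =
        ((A.map (Int.cast : ℤ → ℝ)).charpoly).eval lam := by
      rw [h2, Matrix.charpoly_map, Polynomial.aeval_def, Polynomial.eval₂_eq_eval_map,
        Polynomial.map_map]
      congr 1
    rw [Polynomial.aeval_def] at h1
    rw [h1, aux_eval_charpoly, hdet]
  have hT : Aᵀ.map (Int.cast : ℤ → ℝ) = (A.map (Int.cast : ℤ → ℝ))ᵀ := by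
    ext i j; simp
  have hdetT : (lam • (1 : Matrix (Fin k) (Fin k) ℝ) - Aᵀ.map (Int.cast : ℤ → ℝ)).det = 0 := by
    have h3 : (lam • (1 : Matrix (Fin k) (Fin k) ℝ) - Aᵀ.map (Int.cast : ℤ → ℝ)) =
        (lam • (1 : Matrix (Fin k) (Fin k) ℝ) - A.map (Int.cast : ℤ → ℝ))ᵀ := by
      rw [Matrix.transpose_sub, Matrix.transpose_smul, Matrix.transpose_one, hT]
    rw [h3, Matrix.det_transpose, hdet]
  refine ⟨aux_key A lam hint hdet, ?_⟩
  obtain ⟨w, hw0, hweig, hwmem, hwspan⟩ := aux_key Aᵀ lam hint hdetT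
  refine ⟨w, hw0, ?_, hwmem, hwspan⟩
  rw [← Matrix.mulVec_transpose, ← hT]
  exact hweig
end

section
/- Let K be an abelian group, let β : K → K be a group automorphism, and let F ⊆ K be a finite subset such that the subgroups ⟨β^n(F)⟩ form an increasing chain (⟨β^n(F)⟩ ⊆ ⟨β^{n+1}(F)⟩ for all n ≥ 0) whose union is K. Then for every k ∈ K and every integer m ≥ 1 there exists a positive integer c such that, for every positive integer a, both β^{ac}(k) − k and β^{−ac}(k) − k lie in the subgroup mK = {m·y : y ∈ K}. -/
theorem stmt_11 {K : Type*} [AddCommGroup K] (β : AddAut K) (F : Set K) (hF : F.Finite)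
    (hchain : ∀ n : ℕ,
      AddSubgroup.closure (⇑(n • β) '' F) ≤ AddSubgroup.closure (⇑((n + 1) • β) '' F))
    (hunion : ∀ x : K, ∃ n : ℕ, x ∈ AddSubgroup.closure (⇑(n • β) '' F))
    (x : K) (m : ℕ) (hm : 1 ≤ m) :
    ∃ c : ℕ, 0 < c ∧ ∀ a : ℕ, 0 < a →
      (∃ y : K, ((a * c) • β) x - x = m • y) ∧
      (∃ y : K, ((a * c) • -β) x - x = m • y) := by
  classical
  -- the subgroup mK
  set f : K →+ K := AddMonoidHom.mk' (fun y : K => m • y) (fun a b => smul_add m a b) with hf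
  set H : AddSubgroup K := f.range with hH
  have hmemH : ∀ z : K, z ∈ H ↔ ∃ y : K, m • y = z := by
    intro z; constructor
    · rintro ⟨y, rfl⟩; exact ⟨y, rfl⟩
    · rintro ⟨y, rfl⟩; exact ⟨y, rfl⟩
  -- β maps H onto H
  have hmapH : AddSubgroup.map (β : K ≃+ K).toAddMonoidHom H = H := by
    ext z; simp only [AddSubgroup.mem_map]
    constructor
    · rintro ⟨w, hw, rfl⟩
      obtain ⟨y, rfl⟩ := (hmemH w).mp hw
      exact (hmemH _).mpr ⟨β y, (map_nsmul (β : K ≃+ K).toAddMonoidHom m y).symm⟩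
    · intro hz
      obtain ⟨y, rfl⟩ := (hmemH z).mp hz
      refine ⟨m • ((-β : AddAut K) y), (hmemH _).mpr ⟨_, rfl⟩, ?_⟩
      have h1 : (β : K ≃+ K).toAddMonoidHom (m • ((-β : AddAut K) y))
          = m • β ((-β : AddAut K) y) := map_nsmul _ m _
      rw [h1]
      congr 1
      exact AddAut.apply_neg_self K β y
  let mk : K →+ K ⧸ H := QuotientAddGroup.mk' H
  let βA : AddAut (K ⧸ H) := QuotientAddGroup.congr H H (β : K ≃+ K) hmapH
  have hcomm : ∀ z : K, mk (β z) = βA (mk z) := fun z => rfl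
  have hcomm' : ∀ z : K, mk ((-β : AddAut K) z) = (-βA) (mk z) := by
    intro z
    have h := hcomm ((-β : AddAut K) z)
    rw [AddAut.apply_neg_self K β z] at h
    rw [h]
    exact (AddAut.neg_apply_self (K ⧸ H) βA (mk ((-β : AddAut K) z))).symm
  -- iterates
  have key : ∀ (n : ℕ) (z : K), mk ((n • β) z) = (n • βA) (mk z) := by
    intro n
    induction n with
    | zero => intro z; rfl
    | succ n ih =>
      intro z
      have h1 : ((n + 1) • β) z = β ((n • β) z) := by rw [succ_nsmul']; rfl
      have h2 : ((n + 1) • βA) (mk z) = βA ((n • βA) (mk z)) := by rw [succ_nsmul']; rfl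
      rw [h1, h2, hcomm, ih]
  have key' : ∀ (n : ℕ) (z : K), mk ((n • -β) z) = (n • -βA) (mk z) := by
    intro n
    induction n with
    | zero => intro z; rfl
    | succ n ih =>
      intro z
      have h1 : ((n + 1) • -β) z = (-β : AddAut K) ((n • -β) z) := by rw [succ_nsmul']; rfl
      have h2 : ((n + 1) • -βA) (mk z) = (-βA) ((n • -βA) (mk z)) := by rw [succ_nsmul']; rfl
      rw [h1, h2, hcomm', ih]
  -- images of the chain in the quotient
  let Qn : ℕ → AddSubgroup (K ⧸ H) :=
    fun n => AddSubgroup.closure (⇑mk '' (⇑(n • β) '' F))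
  haveI hQfin : ∀ n : ℕ, Finite ↥(Qn n) := by
    intro n
    haveI : Finite (⇑mk '' (⇑(n • β) '' F)) := ((hF.image _).image _).to_subtype
    haveI : AddGroup.FG ↥(AddSubgroup.closure (⇑mk '' (⇑(n • β) '' F))) :=
      AddGroup.closure_finite_fg _
    refine AddCommGroup.finite_of_fg_torsion _ ?_
    intro g
    refine (isOfFinAddOrder_iff_nsmul_eq_zero).mpr ⟨m, hm, ?_⟩
    have hexp : m • (g : K ⧸ H) = 0 := by
      obtain ⟨z, hz⟩ := QuotientAddGroup.mk'_surjective H (g : K ⧸ H)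
      rw [← hz, ← map_nsmul]
      exact (QuotientAddGroup.eq_zero_iff _).mpr ((hmemH _).mpr ⟨z, rfl⟩)
    exact Subtype.ext (by simpa using hexp)
  have hQeq : ∀ n : ℕ, Qn n = AddSubgroup.map mk (AddSubgroup.closure (⇑(n • β) '' F)) :=
    fun n => (AddMonoidHom.map_closure mk _).symm
  have hQle : ∀ n : ℕ, Qn n ≤ Qn (n + 1) := by
    intro n
    rw [hQeq n, hQeq (n + 1)]
    exact AddSubgroup.map_mono (hchain n)
  have hQmap : ∀ n : ℕ, AddSubgroup.map (βA : (K ⧸ H) ≃+ (K ⧸ H)).toAddMonoidHom (Qn n)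
      = Qn (n + 1) := by
    intro n
    show AddSubgroup.map _ (AddSubgroup.closure _) = _
    rw [AddMonoidHom.map_closure]
    congr 1
    rw [Set.image_image, Set.image_image, Set.image_image]
    refine Set.image_congr' (fun w => ?_)
    show βA (mk ((n • β) w)) = mk (((n + 1) • β) w)
    have h1 : ((n + 1) • β) w = β ((n • β) w) := by rw [succ_nsmul']; rfl
    rw [h1]
    exact (hcomm _).symm
  have hQcard : ∀ n : ℕ, Nat.card ↥(Qn (n + 1)) = Nat.card ↥(Qn n) := by
    intro n
    rw [← hQmap n]
    exact (Nat.card_congr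
      (AddSubgroup.equivMapOfInjective (Qn n) _ (βA : (K ⧸ H) ≃+ (K ⧸ H)).injective).toEquiv).symm
  have hQstab : ∀ n : ℕ, Qn n = Qn 0 := by
    intro n
    induction n with
    | zero => rfl
    | succ n ih =>
      rw [← ih]
      refine le_antisymm ?_ (hQle n)
      have hfin : ((Qn (n + 1) : Set (K ⧸ H))).Finite := Set.toFinite _
      have hsub : ((Qn n : Set (K ⧸ H))) ⊆ (Qn (n + 1) : Set (K ⧸ H)) := hQle n
      have hcard : (Qn (n + 1) : Set (K ⧸ H)).ncard ≤ (Qn n : Set (K ⧸ H)).ncard := by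
        rw [← Nat.card_coe_set_eq, ← Nat.card_coe_set_eq]
        simp only [SetLike.coe_sort_coe]
        rw [hQcard n]
      have heq := Set.eq_of_subset_of_ncard_le hsub hcard hfin
      exact le_of_eq (SetLike.coe_injective heq.symm)
  haveI hfinQ : Finite (K ⧸ H) := by
    have huniv : (Qn 0 : Set (K ⧸ H)) = Set.univ := by
      refine Set.eq_univ_of_forall ?_
      intro q
      obtain ⟨z, rfl⟩ := QuotientAddGroup.mk'_surjective H q
      obtain ⟨n, hn⟩ := hunion z
      have hmem : mk z ∈ Qn n := by
        rw [hQeq n]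
        exact AddSubgroup.mem_map_of_mem mk hn
      rw [hQstab n] at hmem
      exact hmem
    rw [← Set.finite_univ_iff, ← huniv]
    exact Set.toFinite _
  haveI : Finite (AddAut (K ⧸ H)) :=
    Finite.of_injective (fun e : AddAut (K ⧸ H) => (e : (K ⧸ H) → (K ⧸ H)))
      (fun a b hab => by ext q; exact congrFun hab q)
  refine ⟨addOrderOf βA, addOrderOf_pos βA, ?_⟩
  intro a ha
  have hpow : (a * addOrderOf βA) • βA = 0 := by
    rw [mul_comm, mul_nsmul, addOrderOf_nsmul_eq_zero, nsmul_zero]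
  have hpowinv : (a * addOrderOf βA) • -βA = 0 := by
    rw [neg_nsmul, hpow, neg_zero]
  constructor
  · have h1 : mk (((a * addOrderOf βA) • β) x) = mk x := by
      rw [key, hpow]; rfl
    have h2 : mk (((a * addOrderOf βA) • β) x - x) = 0 := by
      rw [map_sub, h1, sub_self]
    obtain ⟨y, hy⟩ := (hmemH _).mp ((QuotientAddGroup.eq_zero_iff _).mp h2)
    exact ⟨y, hy.symm⟩
  · have h1 : mk (((a * addOrderOf βA) • -β) x) = mk x := by
      rw [key', hpowinv]; rfl
    have h2 : mk (((a * addOrderOf βA) • -β) x - x) = 0 := by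
      rw [map_sub, h1, sub_self]
    obtain ⟨y, hy⟩ := (hmemH _).mp ((QuotientAddGroup.eq_zero_iff _).mp h2)
    exact ⟨y, hy.symm⟩
end

section
/- Let G be a torsion-free abelian group, let α : G → G be a group automorphism, and let F ⊆ G be a finite subset such that the subgroups ⟨α^n(F)⟩ form an increasing chain (⟨α^n(F)⟩ ⊆ ⟨α^{n+1}(F)⟩ for all n ≥ 0) whose union is G. Then G is stationary: there exist a natural number k and a k×k integer matrix A such that G is isomorphic, as an abelian group, to the direct limit of the ℕ-indexed direct system whose n-th group is ℤ^k and whose transition map from stage n to stage n' ≥ n is multiplication by A^{n'−n}. -/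
theorem stmt_12 {G : Type*} [AddCommGroup G]
    (htf : ∀ (n : ℕ) (g : G), 0 < n → n • g = 0 → g = 0)
    (α : AddAut G) (F : Set G) (hF : F.Finite)
    (hchain : ∀ n : ℕ,
      AddSubgroup.closure (⇑(n • α) '' F) ≤ AddSubgroup.closure (⇑((n + 1) • α) '' F))
    (hunion : ∀ g : G, ∃ n : ℕ, g ∈ AddSubgroup.closure (⇑(n • α) '' F)) :
    ∃ (k : ℕ) (A : Matrix (Fin k) (Fin k) ℤ),
      Nonempty (G ≃+ Module.DirectLimit (fun _ : ℕ => Fin k → ℤ)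
        (fun i j _ => Matrix.mulVecLin (A ^ (j - i)))) := by
  -- G is torsion-free as a ℤ-module
  haveI : NoZeroSMulDivisors ℤ G := by
    refine ⟨fun {c x} h => ?_⟩
    by_cases hc : c = 0
    · exact Or.inl hc
    · refine Or.inr (htf c.natAbs x (Int.natAbs_pos.mpr hc) ?_)
      have : (c.natAbs : ℤ) • x = 0 := by
        rcases Int.natAbs_eq c with h' | h'
        · rw [← h']; exact h
        · rw [h', neg_smul, neg_eq_zero] at h; exact h
      rwa [natCast_zsmul] at this
  -- the base module
  set M : Submodule ℤ G := Submodule.span ℤ F with hM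
  have hmem : ∀ (s : Set G) (g : G),
      g ∈ Submodule.span ℤ s ↔ g ∈ AddSubgroup.closure s := by
    intro s g
    rw [← Submodule.span_int_eq_addSubgroupClosure]
    rfl
  haveI : Module.Finite ℤ M := Module.Finite.span_of_finite ℤ hF
  -- α⁻¹ maps M into M
  have hMinv : ∀ x : G, x ∈ M → (-α : AddAut G) x ∈ M := by
    intro x hx
    have h0 : x ∈ AddSubgroup.closure (⇑((0 : ℕ) • α) '' F) := by
      simpa [zero_smul] using (hmem F x).mp hx
    have h1 : x ∈ AddSubgroup.closure (⇑α '' F) := by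
      simpa [one_smul] using hchain 0 h0
    have : x ∈ AddSubgroup.map (α : G ≃+ G).toAddMonoidHom (AddSubgroup.closure F) := by
      rwa [AddMonoidHom.map_closure]
    rcases this with ⟨y, hy, hyx⟩
    have : (-α : AddAut G) x = y := by
      have : α y = x := hyx
      rw [← this, AddAut.neg_def]
      exact α.symm_apply_apply y
    rw [this]
    exact (hmem F y).mpr hy
  -- the endomorphism T of M induced by α⁻¹
  let lininv : G →ₗ[ℤ] G := ((-α : AddAut G) : G ≃+ G).toAddMonoidHom.toIntLinearMap
  let T : M →ₗ[ℤ] M := LinearMap.codRestrict M (lininv ∘ₗ M.subtype) (fun x => hMinv x x.2)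
  have hTcoe : ∀ x : M, ((T x : M) : G) = (-α : AddAut G) (x : G) := fun _ => rfl
  have hTpow : ∀ (m : ℕ) (x : M), (((T ^ m) x : M) : G) = (-(m • α) : AddAut G) (x : G) := by
    intro m
    induction m with
    | zero => intro x; simp
    | succ m ih =>
      intro x
      have h1 : (T ^ (m + 1)) x = T ((T ^ m) x) := by
        rw [pow_succ']; rfl
      rw [h1, hTcoe, ih]
      have : (-((m + 1) • α) : AddAut G) = (-α : AddAut G) + -(m • α) := by
        rw [succ_nsmul, neg_add_rev]
      rw [this, AddAut.add_apply]
  -- M is finite free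
  haveI : Module.Free ℤ M := Module.free_of_finite_type_torsion_free'
  set k : ℕ := Fintype.card (Module.Free.ChooseBasisIndex ℤ M) with hk
  let b : Module.Basis (Fin k) ℤ M :=
    (Module.Free.chooseBasis ℤ M).reindex (Fintype.equivFin _)
  set A : Matrix (Fin k) (Fin k) ℤ := LinearMap.toMatrix b b T with hA
  -- action of powers of A on coordinates
  have hApow : ∀ (m : ℕ) (x : M),
      (A ^ m).mulVecLin (⇑(b.repr x)) = ⇑(b.repr ((T ^ m) x)) := by
    intro m
    induction m with
    | zero => intro x; simp
    | succ m ih =>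
      intro x
      have h1 : (A ^ (m + 1)).mulVecLin = A.mulVecLin.comp (A ^ m).mulVecLin := by
        rw [pow_succ', Matrix.mulVecLin_mul]
      rw [h1, LinearMap.comp_apply, ih]
      have h2 : A.mulVecLin (⇑(b.repr ((T ^ m) x))) = ⇑(b.repr (T ((T ^ m) x))) := by
        rw [Matrix.mulVecLin_apply, hA]
        exact LinearMap.toMatrix_mulVec_repr b b T ((T ^ m) x)
      rw [h2, pow_succ']
      rfl
  -- the compatible family of maps into G
  let ψ : ∀ _ : ℕ, (Fin k → ℤ) →ₗ[ℤ] G := fun n =>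
    ((n • α : AddAut G) : G ≃+ G).toAddMonoidHom.toIntLinearMap ∘ₗ
      (M.subtype ∘ₗ (b.equivFun.symm : (Fin k → ℤ) ≃ₗ[ℤ] M).toLinearMap)
  have hψ : ∀ (n : ℕ) (v : Fin k → ℤ),
      ψ n v = (n • α : AddAut G) ((b.equivFun.symm v : M) : G) := fun _ _ => rfl
  have hψrepr : ∀ (n : ℕ) (x : M), ψ n (⇑(b.repr x)) = (n • α : AddAut G) (x : G) := by
    intro n x
    rw [hψ]
    congr 2
    have : (⇑(b.repr x) : Fin k → ℤ) = b.equivFun x := rfl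
    rw [this, b.equivFun.symm_apply_apply]
  have Hg : ∀ (i j : ℕ) (hij : i ≤ j) (v : Fin k → ℤ),
      ψ j ((A ^ (j - i)).mulVecLin v) = ψ i v := by
    intro i j hij v
    set x : M := b.equivFun.symm v with hx
    have hv : v = ⇑(b.repr x) := by
      rw [hx]
      have : ⇑(b.repr (b.equivFun.symm v)) = b.equivFun (b.equivFun.symm v) := rfl
      rw [this, b.equivFun.apply_symm_apply]
    rw [hv, hApow, hψrepr, hψrepr, hTpow]
    have key : (j • α) + -((j - i) • α) = i • α := by
      rw [add_neg_eq_iff_eq_add, ← add_nsmul, Nat.add_sub_cancel' hij]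
    rw [← key, AddAut.add_apply]
  -- the linear map from the direct limit
  let L := Module.DirectLimit.lift ℤ ℕ (fun _ : ℕ => Fin k → ℤ)
    (fun i j _ => Matrix.mulVecLin (A ^ (j - i))) ψ Hg
  have hinj : Function.Injective L := by
    refine Module.DirectLimit.lift_injective _ _ (fun n => ?_)
    intro v w h
    rw [hψ, hψ] at h
    have h2 : ((b.equivFun.symm v : M) : G) = ((b.equivFun.symm w : M) : G) :=
      (n • α).injective h
    exact b.equivFun.symm.injective (Subtype.ext h2)
  have hsurj : Function.Surjective L := by
    intro g
    obtain ⟨n, hg⟩ := hunion g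
    have : g ∈ AddSubgroup.map ((n • α : AddAut G) : G ≃+ G).toAddMonoidHom
        (AddSubgroup.closure F) := by
      rwa [AddMonoidHom.map_closure]
    rcases this with ⟨y, hy, hyg⟩
    have hyM : y ∈ M := (hmem F y).mpr hy
    refine ⟨Module.DirectLimit.of ℤ ℕ (fun _ : ℕ => Fin k → ℤ)
      (fun i j _ => Matrix.mulVecLin (A ^ (j - i))) n (⇑(b.repr ⟨y, hyM⟩)), ?_⟩
    have : L (Module.DirectLimit.of ℤ ℕ (fun _ : ℕ => Fin k → ℤ)
        (fun i j _ => Matrix.mulVecLin (A ^ (j - i))) n (⇑(b.repr ⟨y, hyM⟩)))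
        = ψ n (⇑(b.repr ⟨y, hyM⟩)) := Module.DirectLimit.lift_of _ _ _
    rw [this, hψrepr]
    exact hyg
  exact ⟨k, A, ⟨((LinearEquiv.ofBijective L ⟨hinj, hsurj⟩).symm).toAddEquiv⟩⟩
end
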